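/- Let q₁ = √(1-α²)·[u; 0] + α·[0; 1] ∈ ℝ^{n+1} be a unit vector with u ∈ ℝ^n, ‖u‖ = 1, and α ∈ (0,1]. Let H be symmetric with ‖H‖ ≤ U_H, g ∈ ℝ^n, δ ≥ 0, and F = [[H, g], [gᵀ, -δ]]. If α·gᵀu ≤ 0 and α ≥ (U_H + δ)/√((U_H+δ)² + 4(gᵀu)²), then q₁ᵀFq₁ ≤ -δ. -/

import Mathlib

open Matrix

/-- The homogenized matrix `F = [[H, g], [gᵀ, -δ]]`. -/
noncomputable def homog {n : ℕ} (H : Matrix (Fin n) (Fin n) ℝ) (g : Fin n → ℝ) (δ : ℝ) :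
    Matrix (Fin (n + 1)) (Fin (n + 1)) ℝ :=
  Matrix.of fun i j =>
    if hi : (i : ℕ) < n then
      if hj : (j : ℕ) < n then H ⟨i, hi⟩ ⟨j, hj⟩ else g ⟨i, hi⟩
    else if hj : (j : ℕ) < n then g ⟨j, hj⟩ else -δ

private lemma quad_le_aux {n : ℕ} (H : Matrix (Fin n) (Fin n) ℝ) (u : Fin n → ℝ) (U_H : ℝ)
    (hu : u ⬝ᵥ u = 1) (hHnorm : ‖Matrix.toEuclideanCLM (𝕜 := ℝ) H‖ ≤ U_H) :
    u ⬝ᵥ (H *ᵥ u) ≤ U_H := by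
  set x : EuclideanSpace ℝ (Fin n) := (WithLp.equiv 2 _).symm u with hx
  have hinner : (inner ℝ x x : ℝ) = 1 := by
    rw [PiLp.inner_apply]; simpa [hx, RCLike.inner_apply, dotProduct, mul_comm, sq] using hu
  have hnx : ‖x‖ = 1 := by
    have := real_inner_self_eq_norm_sq x
    nlinarith [norm_nonneg x]
  have key : u ⬝ᵥ (H *ᵥ u) = inner ℝ x (Matrix.toEuclideanCLM (𝕜 := ℝ) H x) := by
    rw [PiLp.inner_apply]
    rw [hx, WithLp.equiv_symm_apply, Matrix.toEuclideanCLM_toLp]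
    simp [RCLike.inner_apply, dotProduct, mul_comm]
  rw [key]
  calc (inner ℝ x (Matrix.toEuclideanCLM (𝕜 := ℝ) H x) : ℝ)
      ≤ ‖x‖ * ‖Matrix.toEuclideanCLM (𝕜 := ℝ) H x‖ := real_inner_le_norm _ _
    _ ≤ ‖x‖ * (‖Matrix.toEuclideanCLM (𝕜 := ℝ) H‖ * ‖x‖) :=
        mul_le_mul_of_nonneg_left (ContinuousLinearMap.le_opNorm _ _) (norm_nonneg _)
    _ ≤ U_H := by rw [hnx, one_mul, mul_one]; exact hHnorm

private lemma neg_le_of_sq_aux (a b : ℝ) (ha : a ≤ 0) (hb : b ≤ 0) (h : b ^ 2 ≤ a ^ 2) :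
    a ≤ b := by
  nlinarith [sq_nonneg (a - b), sq_nonneg (a + b)]

private lemma cross_aux (s α G U_H δ : ℝ) (h1α : 0 ≤ 1 - α ^ 2) (hs0 : 0 ≤ s)
    (hs2 : s * s = 1 - α ^ 2) (hsign : α * G ≤ 0) (hpos : 0 ≤ U_H + δ)
    (hkey : (1 - α ^ 2) * (U_H + δ) ^ 2 ≤ 4 * α ^ 2 * G ^ 2) :
    2 * (α * s * G) ≤ -((1 - α ^ 2) * (U_H + δ)) := by
  refine neg_le_of_sq_aux _ _ (by nlinarith) (by nlinarith) ?_
  have h2 := mul_le_mul_of_nonneg_left hkey h1α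
  have h3 : (2 * (α * s * G)) ^ 2 = (1 - α ^ 2) * (4 * α ^ 2 * G ^ 2) := by
    rw [← hs2]; ring
  have h4 : (-((1 - α ^ 2) * (U_H + δ))) ^ 2 = (1 - α ^ 2) * ((1 - α ^ 2) * (U_H + δ) ^ 2) := by
    ring
  linarith

private lemma expand_aux {n : ℕ} (H : Matrix (Fin n) (Fin n) ℝ) (g u : Fin n → ℝ) (δ s α : ℝ) :
    (Fin.snoc (s • u) α : Fin (n+1) → ℝ) ⬝ᵥ (homog H g δ *ᵥ Fin.snoc (s • u) α) =
      s * s * (u ⬝ᵥ (H *ᵥ u)) + 2 * (α * s * (g ⬝ᵥ u)) - δ * α ^ 2 := by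
  set q₁ : Fin (n+1) → ℝ := Fin.snoc (s • u) α with hq₁
  have hv1 : ∀ i : Fin n, (homog H g δ *ᵥ q₁) i.castSucc = s * (H *ᵥ u) i + α * g i := by
    intro i
    simp only [mulVec, dotProduct, Fin.sum_univ_castSucc, hq₁, Fin.snoc_castSucc,
      Fin.snoc_last, homog, Matrix.of_apply, Fin.coe_castSucc, Fin.is_lt, dif_pos,
      Fin.val_last, lt_irrefl, dite_false, Fin.eta, Pi.smul_apply, smul_eq_mul,
      Finset.mul_sum]
    exact congrArg₂ (· + ·) (Finset.sum_congr rfl fun j _ => by ring) (by ring)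
  have hv2 : (homog H g δ *ᵥ q₁) (Fin.last n) = s * (g ⬝ᵥ u) - δ * α := by
    simp only [mulVec, dotProduct, Fin.sum_univ_castSucc, hq₁, Fin.snoc_castSucc,
      Fin.snoc_last, homog, Matrix.of_apply, Fin.coe_castSucc, Fin.is_lt, dif_pos,
      Fin.val_last, lt_irrefl, dite_false, Fin.eta, Pi.smul_apply, smul_eq_mul,
      Finset.mul_sum]
    rw [sub_eq_add_neg]
    exact congrArg₂ (· + ·) (Finset.sum_congr rfl fun j _ => by ring) (by ring)
  simp only [hq₁] at hv1 hv2
  rw [dotProduct, Fin.sum_univ_castSucc]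
  simp only [hq₁, Fin.snoc_castSucc, Fin.snoc_last, hv1, hv2, Pi.smul_apply, smul_eq_mul]
  have h1 : ∑ x : Fin n, s * u x * (s * (H *ᵥ u) x + α * g x)
      = s * s * (u ⬝ᵥ (H *ᵥ u)) + α * s * (g ⬝ᵥ u) := by
    rw [dotProduct, dotProduct, Finset.mul_sum, Finset.mul_sum, ← Finset.sum_add_distrib]
    exact Finset.sum_congr rfl fun x _ => by ring
  rw [h1]; ring

/-- The skewed initialization `q₁ = √(1-α²)[u;0] + α[0;1]` has Rayleigh quotient
at most `-δ` under the stated conditions on `α`. -/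
theorem skewed_init_rayleigh_bound {n : ℕ}
    (H : Matrix (Fin n) (Fin n) ℝ) (hH : H.IsHermitian)
    (g u : Fin n → ℝ) (U_H δ α : ℝ)
    (hu : u ⬝ᵥ u = 1) (hα0 : 0 < α) (hα1 : α ≤ 1)
    (hHnorm : ‖Matrix.toEuclideanCLM (𝕜 := ℝ) H‖ ≤ U_H) (hδ : 0 ≤ δ)
    (hsign : α * (g ⬝ᵥ u) ≤ 0)
    (hαbig : (U_H + δ) / Real.sqrt ((U_H + δ) ^ 2 + 4 * (g ⬝ᵥ u) ^ 2) ≤ α)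
    (q₁ : Fin (n + 1) → ℝ)
    (hq₁ : q₁ = Fin.snoc (Real.sqrt (1 - α ^ 2) • u) α) :
    q₁ ⬝ᵥ (homog H g δ *ᵥ q₁) ≤ -δ := by
  set s := Real.sqrt (1 - α ^ 2) with hs
  set G := g ⬝ᵥ u with hG
  have h1α : (0:ℝ) ≤ 1 - α ^ 2 := by nlinarith
  have hs0 : 0 ≤ s := Real.sqrt_nonneg _
  have hs2 : s * s = 1 - α ^ 2 := Real.mul_self_sqrt h1α
  have hUH0 : 0 ≤ U_H := le_trans (norm_nonneg _) hHnorm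
  have hA : u ⬝ᵥ (H *ᵥ u) ≤ U_H := quad_le_aux H u U_H hu hHnorm
  -- the key inequality on α
  have hD0 : (0:ℝ) ≤ (U_H + δ) ^ 2 + 4 * G ^ 2 := by positivity
  have hsqD : Real.sqrt ((U_H + δ) ^ 2 + 4 * G ^ 2) ^ 2 = (U_H + δ) ^ 2 + 4 * G ^ 2 :=
    Real.sq_sqrt hD0
  have hstep : U_H + δ ≤ α * Real.sqrt ((U_H + δ) ^ 2 + 4 * G ^ 2) := by
    rcases eq_or_lt_of_le (Real.sqrt_nonneg ((U_H + δ) ^ 2 + 4 * G ^ 2)) with h | h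
    · have : (U_H + δ) ^ 2 + 4 * G ^ 2 = 0 := by rw [← hsqD, ← h]; ring
      have : U_H + δ = 0 := by nlinarith
      rw [this]; positivity
    · have := (div_le_iff₀ h).mp hαbig
      linarith
  have hkey : (1 - α ^ 2) * (U_H + δ) ^ 2 ≤ 4 * α ^ 2 * G ^ 2 := by
    have hsq : (U_H + δ) ^ 2 ≤ α ^ 2 * ((U_H + δ) ^ 2 + 4 * G ^ 2) := by
      have := mul_self_le_mul_self (by positivity) hstep
      nlinarith [Real.sqrt_nonneg ((U_H + δ) ^ 2 + 4 * G ^ 2)]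
    nlinarith
  have hcross : 2 * (α * s * G) ≤ -((1 - α ^ 2) * (U_H + δ)) :=
    cross_aux s α G U_H δ h1α hs0 hs2 hsign (by linarith) hkey
  rw [hq₁, expand_aux]
  have hAterm : s * s * (u ⬝ᵥ (H *ᵥ u)) ≤ (1 - α ^ 2) * U_H := by
    rw [hs2]
    exact mul_le_mul_of_nonneg_left hA h1α
  calc s * s * (u ⬝ᵥ (H *ᵥ u)) + 2 * (α * s * G) - δ * α ^ 2
      ≤ (1 - α ^ 2) * U_H + (-((1 - α ^ 2) * (U_H + δ))) - δ * α ^ 2 := by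
        linarith
    _ = -δ := by ring
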